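/- Let 0 < ε < 1 and let v, r be points in a metric space with distance δ, and suppose (z_i)_{i=0,1,...,k} is a sequence of points such that for each i ≥ 1: δ(v, z_i) < (1+ε)^{-1}·(δ(v, z_{i-1}) + δ(r, z_i) − δ(r, z_{i-1})) and δ(v, z_0) ≤ δ(v, z_i). Then for each i, δ(v, z_i) − δ(r, z_i) < δ(v, z_0) − δ(r, z_0) − i·(ε − ε²)·δ(v, z_0). -/
import Mathlib


theorem portal_recurrence {X : Type*} [MetricSpace X] (ε : ℝ) (h0 : 0 < ε) (h1 : ε < 1)
    (v r : X) (k : ℕ) (z : ℕ → X)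
    (hrec : ∀ i, 1 ≤ i → i ≤ k →
      dist v (z i) < (1 + ε)⁻¹ * (dist v (z (i - 1)) + dist r (z i) - dist r (z (i - 1))))
    (hmin : ∀ i, i ≤ k → dist v (z 0) ≤ dist v (z i)) :
    ∀ i, 1 ≤ i → i ≤ k →
      dist v (z i) - dist r (z i) <
        dist v (z 0) - dist r (z 0) - (i : ℝ) * (ε - ε ^ 2) * dist v (z 0) := by
  have hd0 : 0 ≤ dist v (z 0) := dist_nonneg
  have step : ∀ i, 1 ≤ i → i ≤ k →
      dist v (z i) - dist r (z i) <
        dist v (z (i - 1)) - dist r (z (i - 1)) - (ε - ε ^ 2) * dist v (z 0) := by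
    intro i hi hik
    have h := hrec i hi hik
    have hpos : (0:ℝ) < 1 + ε := by linarith
    rw [inv_mul_eq_div, lt_div_iff₀ hpos] at h
    have hdm := hmin i hik
    have hdi : 0 ≤ dist v (z i) := dist_nonneg
    nlinarith [mul_nonneg h0.le (sub_nonneg.2 hdm), mul_nonneg (mul_nonneg h0.le h0.le) hd0]
  intro i hi
  induction i, hi using Nat.le_induction with
  | base =>
    intro hik
    have := step 1 le_rfl hik
    simpa using this
  | succ n hn ih =>
    intro hik
    have h1 : n ≤ k := le_trans (Nat.le_succ n) hik
    have hs := step (n + 1) (by omega) hik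
    have ihn := ih h1
    have hnn : n + 1 - 1 = n := by omega
    rw [hnn] at hs
    push_cast
    linarith
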